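/- Let X = PPᵀ where P ∈ {0,1}^{n×k}. Then for every subset S ⊆ [n], ∑_{i∈S} X_{ii} ≤ ∑_{i,j∈S, i<j} X_{ij} + k. -/

import Mathlib

lemma key {n : ℕ} (S : Finset (Fin n)) (f : Fin n → ℕ) (hf : ∀ i, f i = 0 ∨ f i = 1) :
    ∑ i ∈ S, f i ≤ (∑ i ∈ S, ∑ j ∈ S.filter (fun j => i < j), f i * f j) + 1 := by
  set m := ∑ i ∈ S, f i with hm
  set p := ∑ i ∈ S, ∑ j ∈ S.filter (fun j => i < j), f i * f j with hp
  have hsq : ∀ i ∈ S, f i * f i = f i := by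
    intro i _; rcases hf i with h | h <;> simp [h]
  have hswap : ∑ i ∈ S, ∑ j ∈ S.filter (fun j => j < i), f i * f j = p := by
    rw [hp]
    simp only [Finset.sum_filter]
    rw [Finset.sum_comm]
    refine Finset.sum_congr rfl fun i _ => Finset.sum_congr rfl fun j _ => ?_
    rcases lt_trichotomy i j with h | h | h <;> simp [h, not_lt_of_gt, mul_comm]
  have h2 : 2 * p + m = m * m := by
    have expand : m * m = ∑ i ∈ S, ∑ j ∈ S, f i * f j := by
      rw [hm, Finset.sum_mul_sum]
    rw [expand]
    have split : ∀ i ∈ S, ∑ j ∈ S, f i * f j =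
        (∑ j ∈ S.filter (fun j => i < j), f i * f j) +
        (∑ j ∈ S.filter (fun j => j < i), f i * f j) + f i := by
      intro i hi
      rw [← Finset.sum_filter_add_sum_filter_not S (fun j => i < j)]
      have : S.filter (fun j => ¬ i < j) = insert i (S.filter (fun j => j < i)) := by
        ext x
        simp only [Finset.mem_filter, Finset.mem_insert, not_lt]
        constructor
        · rintro ⟨hx, hle⟩
          rcases eq_or_lt_of_le hle with h | h
          · exact Or.inl h
          · exact Or.inr ⟨hx, h⟩
        · rintro (rfl | ⟨hx, h⟩)
          · exact ⟨hi, le_refl _⟩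
          · exact ⟨hx, le_of_lt h⟩
      rw [this, Finset.sum_insert (by simp), hsq i hi]
      ring
    rw [Finset.sum_congr rfl split, Finset.sum_add_distrib, Finset.sum_add_distrib, hswap, ← hp, ← hm]
    ring
  rcases Nat.lt_or_ge m 3 with h | h
  · interval_cases m <;> omega
  · have h3 : 3 * m ≤ m * m := Nat.mul_le_mul_right m h
    omega

theorem stmt_3 {n k : ℕ} (P : Fin n → Fin k → ℕ)
    (hP : ∀ i c, P i c = 0 ∨ P i c = 1)
    (X : Fin n → Fin n → ℕ)
    (hX : ∀ i j, X i j = ∑ c, P i c * P j c)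
    (S : Finset (Fin n)) :
    ∑ i ∈ S, X i i ≤ (∑ i ∈ S, ∑ j ∈ S.filter (fun j => i < j), X i j) + k := by
  simp only [hX]
  have lhs : ∑ i ∈ S, ∑ c, P i c * P i c = ∑ c, ∑ i ∈ S, P i c := by
    rw [Finset.sum_comm]
    refine Finset.sum_congr rfl fun c _ => Finset.sum_congr rfl fun i _ => ?_
    rcases hP i c with h | h <;> simp [h]
  have rhs : (∑ i ∈ S, ∑ j ∈ S.filter (fun j => i < j), ∑ c, P i c * P j c)
      = ∑ c : Fin k, ∑ i ∈ S, ∑ j ∈ S.filter (fun j => i < j), P i c * P j c := by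
    rw [Finset.sum_comm]
    exact Finset.sum_congr rfl fun i _ => Finset.sum_comm
  rw [lhs, rhs]
  calc ∑ c : Fin k, ∑ i ∈ S, P i c
      ≤ ∑ c : Fin k, ((∑ i ∈ S, ∑ j ∈ S.filter (fun j => i < j), P i c * P j c) + 1) :=
        Finset.sum_le_sum fun c _ => key S (fun i => P i c) (fun i => hP i c)
    _ = (∑ c : Fin k, ∑ i ∈ S, ∑ j ∈ S.filter (fun j => i < j), P i c * P j c) + k := by
        rw [Finset.sum_add_distrib]; simp
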